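/- For all integers K ≥ 1 and d ≥ 2, the function T ↦ g(T;K,d) is monotone nondecreasing on the interval [0, K−1]. -/
import Mathlib

open Real intervalIntegral

/-- `g T K d = ∫_0^T (t^{K-1} e^{-t}/(K-1)!) · e^{-(T-t)(d-1)} dt` (Eq. (3) of the paper). -/
noncomputable def g (T : ℝ) (K d : ℕ) : ℝ :=
  ∫ t in (0:ℝ)..T, (t ^ (K - 1) * Real.exp (-t) / (Nat.factorial (K - 1) : ℝ)) *
    Real.exp (-(T - t) * ((d : ℝ) - 1))

lemma F_mono (n : ℕ) : MonotoneOn (fun t : ℝ => t ^ n * Real.exp (-t)) (Set.Icc 0 (n:ℝ)) := by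
  rcases Nat.eq_zero_or_pos n with h0 | hn
  · subst h0
    intro x hx y hy _
    simp only [Set.mem_Icc, Nat.cast_zero] at hx hy
    simp [le_antisymm hx.2 hx.1, le_antisymm hy.2 hy.1]
  · apply monotoneOn_of_deriv_nonneg (convex_Icc _ _)
    · exact ((continuous_pow n).mul (Real.continuous_exp.comp continuous_neg)).continuousOn
    · intro t ht
      exact (((differentiable_pow n) t).mul
        ((Real.differentiable_exp.comp differentiable_neg) t)).differentiableWithinAt
    · intro t ht
      rw [interior_Icc, Set.mem_Ioo] at ht
      have hder : HasDerivAt (fun t : ℝ => t ^ n * Real.exp (-t))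
          ((n : ℝ) * t ^ (n - 1) * Real.exp (-t) + t ^ n * (Real.exp (-t) * (-1))) t :=
        (hasDerivAt_pow n t).mul ((Real.hasDerivAt_exp (-t)).comp t (hasDerivAt_neg t))
      rw [hder.deriv]
      have h1 : t ^ n = t ^ (n - 1) * t := by
        rw [← pow_succ, Nat.sub_add_cancel hn]
      have heq : (n : ℝ) * t ^ (n - 1) * Real.exp (-t) + t ^ n * (Real.exp (-t) * (-1))
          = t ^ (n - 1) * ((n : ℝ) - t) * Real.exp (-t) := by
        rw [h1]; ring
      rw [heq]
      exact mul_nonneg (mul_nonneg (pow_nonneg ht.1.le _) (sub_nonneg.mpr ht.2.le))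
        (Real.exp_pos _).le

lemma g_eq (T : ℝ) (K d : ℕ) :
    g T K d = ∫ s in (0:ℝ)..T,
      ((T - s) ^ (K - 1) * Real.exp (-(T - s)) / (Nat.factorial (K - 1) : ℝ)) *
        Real.exp (-s * ((d : ℝ) - 1)) := by
  have h := intervalIntegral.integral_comp_sub_left
    (a := (0:ℝ)) (b := T)
    (f := fun t => (t ^ (K - 1) * Real.exp (-t) / (Nat.factorial (K - 1) : ℝ)) *
      Real.exp (-(T - t) * ((d : ℝ) - 1))) T
  simp only [sub_self, sub_zero] at h
  rw [g, ← h]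
  congr 1
  ext s
  congr 2
  ring_nf

/-- for integers `K ≥ 1` and `d ≥ 2`, the function `T ↦ g(T;K,d)` is
monotone nondecreasing on `[0, K−1]`. -/
theorem stmt_3 (K d : ℕ) (hK : 1 ≤ K) (hd : 2 ≤ d) :
    MonotoneOn (fun T => g T K d) (Set.Icc (0:ℝ) ((K : ℝ) - 1)) := by
  have hcastK : ((K - 1 : ℕ) : ℝ) = (K : ℝ) - 1 := by
    rw [Nat.cast_sub hK]; norm_num
  have hfact : (0:ℝ) < (Nat.factorial (K - 1) : ℝ) := by
    exact_mod_cast Nat.factorial_pos _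
  set n := K - 1 with hn
  intro a ha b hb hab
  simp only
  rw [g_eq, g_eq]
  have ha0 : (0:ℝ) ≤ a := ha.1
  have hbK : b ≤ (K : ℝ) - 1 := hb.2
  -- continuity of the integrand for T = b
  have hcont : ∀ T : ℝ, Continuous (fun s : ℝ =>
      ((T - s) ^ n * Real.exp (-(T - s)) / (Nat.factorial n : ℝ)) *
        Real.exp (-s * ((d : ℝ) - 1))) := by
    intro T
    fun_prop
  have hib1 : IntervalIntegrable (fun s : ℝ =>
      ((b - s) ^ n * Real.exp (-(b - s)) / (Nat.factorial n : ℝ)) *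
        Real.exp (-s * ((d : ℝ) - 1))) MeasureTheory.volume 0 a :=
    ((hcont b).intervalIntegrable _ _)
  have hib2 : IntervalIntegrable (fun s : ℝ =>
      ((b - s) ^ n * Real.exp (-(b - s)) / (Nat.factorial n : ℝ)) *
        Real.exp (-s * ((d : ℝ) - 1))) MeasureTheory.volume a b :=
    ((hcont b).intervalIntegrable _ _)
  rw [← intervalIntegral.integral_add_adjacent_intervals hib1 hib2]
  have step1 : (∫ s in (0:ℝ)..a,
      ((a - s) ^ n * Real.exp (-(a - s)) / (Nat.factorial n : ℝ)) *
        Real.exp (-s * ((d : ℝ) - 1)))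
      ≤ ∫ s in (0:ℝ)..a,
      ((b - s) ^ n * Real.exp (-(b - s)) / (Nat.factorial n : ℝ)) *
        Real.exp (-s * ((d : ℝ) - 1)) := by
    apply intervalIntegral.integral_mono_on (μ := MeasureTheory.volume) ha0
      ((hcont a).intervalIntegrable _ _) ((hcont b).intervalIntegrable _ _)
    intro s hs
    have hs0 : 0 ≤ s := hs.1
    have hsa : s ≤ a := hs.2
    have h1 : (0:ℝ) ≤ a - s := by linarith
    have h2 : a - s ≤ b - s := by linarith
    have h3 : b - s ≤ (n : ℝ) := by rw [hn, hcastK]; linarith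
    have hF := F_mono n (Set.mem_Icc.mpr ⟨h1, le_trans h2 h3⟩)
      (Set.mem_Icc.mpr ⟨le_trans h1 h2, h3⟩) h2
    simp only at hF
    gcongr
  have step2 : (0:ℝ) ≤ ∫ s in a..b,
      ((b - s) ^ n * Real.exp (-(b - s)) / (Nat.factorial n : ℝ)) *
        Real.exp (-s * ((d : ℝ) - 1)) := by
    apply intervalIntegral.integral_nonneg hab
    intro s hs
    have hbs : (0:ℝ) ≤ b - s := by have := hs.2; linarith
    exact mul_nonneg (div_nonneg (mul_nonneg (pow_nonneg hbs _) (Real.exp_pos _).le)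
      hfact.le) (Real.exp_pos _).le
  linarith
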